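/- Monotonicity of the length functional under holomorphic extension to the disk: let R > 0 and let g : ℂ → ℂ be holomorphic on the open disk {z ∈ ℂ : |z| < R}. Then the function Λ : (0,R) → ℝ defined by Λ(r) = ∫₀^{2π} |g′(re^{iθ})| r dθ (the length of the image under g of the circle of radius r) is monotone nondecreasing in r. -/

import Mathlib

open Real MeasureTheory intervalIntegral Set Metric

lemma poisson_rep {r2 : ℝ} (hr2 : 0 < r2) {h : ℂ → ℂ}
    (hc : ContinuousOn h (closedBall 0 r2))
    (hd : ∀ z ∈ ball (0:ℂ) r2, DifferentiableAt ℂ h z)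
    {w : ℂ} (hw : ‖w‖ < r2) :
    ∫ t in (0:ℝ)..(2*π),
        (((r2^2 - ‖w‖^2) / ‖circleMap 0 r2 t - w‖^2 : ℝ) : ℂ)
          * h (circleMap 0 r2 t)
      = 2 * π * h w := by
  have hw' : w ∈ ball (0:ℂ) r2 := by
    simpa [mem_ball_zero_iff] using hw
  have hDCC : DiffContOnCl ℂ h (ball 0 r2) := by
    refine ⟨fun z hz => (hd z hz).differentiableWithinAt, ?_⟩
    rwa [closure_ball (0:ℂ) hr2.ne']
  have habs : ∀ t : ℝ, ‖circleMap 0 r2 t‖ = r2 := by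
    intro t; simpa [abs_of_pos hr2] using norm_circleMap_zero r2 t
  -- denominator of the reflected term is nonvanishing on the closed ball
  have hden : ∀ z : ℂ, ‖z‖ ≤ r2 → ((r2:ℂ)^2 - (starRingEnd ℂ) w * z) ≠ 0 := by
    intro z hz
    have : ‖(starRingEnd ℂ) w * z‖ < ‖(r2:ℂ)^2‖ := by
      have h1 : ‖(starRingEnd ℂ) w * z‖ ≤ ‖w‖ * r2 := by
        rw [norm_mul, Complex.norm_conj]
        exact mul_le_mul_of_nonneg_left hz (norm_nonneg w)
      have h2 : ‖w‖ * r2 < r2 * r2 := by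
        exact mul_lt_mul_of_pos_right hw hr2
      calc ‖(starRingEnd ℂ) w * z‖ ≤ ‖w‖ * r2 := h1
        _ < r2 * r2 := h2
        _ = ‖(r2:ℂ)^2‖ := by
            rw [norm_pow, Complex.norm_real, Real.norm_eq_abs, abs_of_pos hr2]; ring
    intro hcon
    rw [sub_eq_zero] at hcon
    exact absurd (hcon ▸ rfl) (ne_of_gt this)
  -- Cauchy integral formula
  have cauchy := hDCC.circleIntegral_sub_inv_smul hw'
  -- Cauchy-Goursat for the reflected kernel
  set F : ℂ → ℂ := fun z => (starRingEnd ℂ) w * h z * ((r2:ℂ)^2 - (starRingEnd ℂ) w * z)⁻¹ with hF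
  have hFc : ContinuousOn F (closedBall 0 r2) := by
    apply (continuousOn_const.mul hc).mul
    apply ContinuousOn.inv₀ (continuousOn_const.sub (continuousOn_const.mul continuousOn_id))
    intro z hz
    exact hden z (by simpa [mem_closedBall_zero_iff] using hz)
  have hFd : ∀ z ∈ ball (0:ℂ) r2 \ (∅ : Set ℂ), DifferentiableAt ℂ F z := by
    intro z hz
    have hz' : ‖z‖ ≤ r2 := by
      have := hz.1
      rw [mem_ball_zero_iff] at this
      exact this.le
    exact ((differentiableAt_const _).mul (hd z hz.1)).mul
      (((differentiableAt_const _).sub ((differentiableAt_const _).mul differentiableAt_id)).inv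
        (hden z hz'))
  have zero := Complex.circleIntegral_eq_zero_of_differentiable_on_off_countable hr2.le
    countable_empty hFc hFd
  -- expand both circle integrals as interval integrals
  rw [circleIntegral] at cauchy zero
  simp only [deriv_circleMap, smul_eq_mul] at cauchy zero
  -- integrands are continuous
  have hcm : Continuous fun t : ℝ => circleMap 0 r2 t := continuous_circleMap 0 r2
  have hhcm : Continuous fun t : ℝ => h (circleMap 0 r2 t) := by
    apply hc.comp_continuous hcm
    intro t
    simpa [mem_closedBall_zero_iff] using (habs t).le
  have hsubne : ∀ t : ℝ, circleMap 0 r2 t - w ≠ 0 := by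
    intro t
    rw [sub_ne_zero]
    intro hcon
    rw [← hcon, habs t] at hw
    exact lt_irrefl _ hw
  have h1cont : Continuous fun t : ℝ =>
      circleMap 0 r2 t * Complex.I * ((circleMap 0 r2 t - w)⁻¹ * h (circleMap 0 r2 t)) := by
    exact (hcm.mul continuous_const).mul
      (((hcm.sub continuous_const).inv₀ hsubne).mul hhcm)
  have h2cont : Continuous fun t : ℝ =>
      circleMap 0 r2 t * Complex.I * F (circleMap 0 r2 t) := by
    refine (hcm.mul continuous_const).mul ?_
    refine (continuous_const.mul hhcm).mul ?_
    exact (continuous_const.sub (continuous_const.mul hcm)).inv₀ fun t => hden _ (habs t).le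
  -- key pointwise identity
  have key : ∀ t : ℝ,
      circleMap 0 r2 t * Complex.I * ((circleMap 0 r2 t - w)⁻¹ * h (circleMap 0 r2 t))
        + circleMap 0 r2 t * Complex.I * F (circleMap 0 r2 t)
      = Complex.I * ((((r2^2 - ‖w‖^2) / ‖circleMap 0 r2 t - w‖^2 : ℝ) : ℂ)
          * h (circleMap 0 r2 t)) := by
    intro t
    set z := circleMap 0 r2 t with hz
    have hzz : z * (starRingEnd ℂ) z = ((r2:ℝ)^2 : ℂ) := by
      rw [Complex.mul_conj]
      norm_cast
      rw [Complex.normSq_eq_norm_sq, habs t]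
    have hww : ((‖w‖ : ℂ)) ^ 2 = w * (starRingEnd ℂ) w := by
      rw [← Complex.ofReal_pow, Complex.sq_norm]; exact (Complex.mul_conj w).symm
    have hzw : ((‖z - w‖ : ℂ)) ^ 2 = (z - w) * ((starRingEnd ℂ) z - (starRingEnd ℂ) w) := by
      rw [← Complex.ofReal_pow, Complex.sq_norm, ← map_sub]; exact (Complex.mul_conj (z-w)).symm
    have hne1 : z - w ≠ 0 := hsubne t
    have hne2 : (starRingEnd ℂ) z - (starRingEnd ℂ) w ≠ 0 := by
      intro e
      exact hne1 (by simpa using congrArg (starRingEnd ℂ) e)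
    have hne3 : ((r2:ℂ)^2 - (starRingEnd ℂ) w * z) ≠ 0 := hden z (habs t).le
    simp only [hF]
    push_cast
    rw [hww, hzw]
    have hr2z : ((r2:ℂ))^2 = z * (starRingEnd ℂ) z := by
      rw [hzz]; try norm_cast
    rw [hr2z]
    have hne3' : z * (starRingEnd ℂ) z - (starRingEnd ℂ) w * z ≠ 0 := by
      rw [← hr2z]; exact hne3
    have hz0 : z ≠ 0 := norm_ne_zero_iff.mp (by rw [hz, habs t]; exact hr2.ne')
    field_simp
    ring
  -- integrate the identity
  have hint : ∫ t in (0:ℝ)..(2*π),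
      (circleMap 0 r2 t * Complex.I * ((circleMap 0 r2 t - w)⁻¹ * h (circleMap 0 r2 t))
        + circleMap 0 r2 t * Complex.I * F (circleMap 0 r2 t))
      = 2 * π * Complex.I * h w := by
    rw [intervalIntegral.integral_add (h1cont.intervalIntegrable _ _)
      (h2cont.intervalIntegrable _ _), cauchy, zero, add_zero]
  have hint2 : Complex.I * ∫ t in (0:ℝ)..(2*π),
      (((r2^2 - ‖w‖^2) / ‖circleMap 0 r2 t - w‖^2 : ℝ) : ℂ)
        * h (circleMap 0 r2 t) = 2 * π * Complex.I * h w := by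
    rw [← intervalIntegral.integral_const_mul, ← hint]
    exact intervalIntegral.integral_congr fun t _ => (key t).symm
  have h3 := mul_left_cancel₀ Complex.I_ne_zero
    (hint2.trans (by ring : (2 * ↑π * Complex.I * h w : ℂ) = Complex.I * (2 * ↑π * h w)))
  exact h3

lemma mean_mono {R : ℝ} {h : ℂ → ℂ} (hh : ∀ z : ℂ, ‖z‖ < R → DifferentiableAt ℂ h z)
    {r1 r2 : ℝ} (h1 : 0 < r1) (h12 : r1 < r2) (h2 : r2 < R) :
    (∫ θ in (0:ℝ)..(2*π), ‖h (circleMap 0 r1 θ)‖)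
      ≤ ∫ θ in (0:ℝ)..(2*π), ‖h (circleMap 0 r2 θ)‖ := by
  have hr2 : 0 < r2 := h1.trans h12
  have h2pi : (0:ℝ) < 2*π := Real.two_pi_pos
  have hcball : ContinuousOn h (closedBall 0 r2) := fun z hz => by
    have : ‖z‖ ≤ r2 := by
      simpa [mem_closedBall_zero_iff] using hz
    exact (hh z (lt_of_le_of_lt this h2)).continuousAt.continuousWithinAt
  have hdball : ∀ z ∈ ball (0:ℂ) r2, DifferentiableAt ℂ h z := fun z hz => by
    have : ‖z‖ < r2 := by
      simpa [mem_ball_zero_iff] using hz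
    exact hh z (this.trans h2)
  have habs1 : ∀ θ : ℝ, ‖circleMap 0 r1 θ‖ = r1 := fun θ => by
    simpa [abs_of_pos h1] using norm_circleMap_zero r1 θ
  have habs2 : ∀ t : ℝ, ‖circleMap 0 r2 t‖ = r2 := fun t => by
    simpa [abs_of_pos hr2] using norm_circleMap_zero r2 t
  set P : ℝ → ℝ → ℝ :=
    fun θ t => (r2^2 - r1^2) / (‖circleMap 0 r2 t - circleMap 0 r1 θ‖)^2 with hPdef
  have hne : ∀ θ t : ℝ, circleMap 0 r2 t - circleMap 0 r1 θ ≠ 0 := by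
    intro θ t he
    rw [sub_eq_zero] at he
    have := congrArg Norm.norm he
    rw [habs2, habs1] at this
    exact absurd this (ne_of_gt h12)
  -- continuity of h along circles
  have hhcm2 : Continuous fun t : ℝ => h (circleMap 0 r2 t) := by
    apply hcball.comp_continuous (continuous_circleMap 0 r2)
    intro t
    simpa [mem_closedBall_zero_iff] using (habs2 t).le
  have hhcm1 : Continuous fun θ : ℝ => h (circleMap 0 r1 θ) := by
    apply hcball.comp_continuous (continuous_circleMap 0 r1)
    intro θ
    rw [mem_closedBall_zero_iff, habs1]
    exact h12.le
  -- continuity of the kernel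
  have hQcont : Continuous (Function.uncurry
      (fun θ t => P θ t * ‖h (circleMap 0 r2 t)‖)) := by
    apply Continuous.mul
    · apply Continuous.div continuous_const
      · exact (continuous_norm.comp
          (((continuous_circleMap 0 r2).comp continuous_snd).sub
            ((continuous_circleMap 0 r1).comp continuous_fst))).pow 2
      · intro p
        exact pow_ne_zero 2 (norm_ne_zero_iff.mpr (hne p.1 p.2))
    · exact continuous_norm.comp (hhcm2.comp continuous_snd)
  have hPnonneg : ∀ θ t : ℝ, 0 ≤ P θ t := fun θ t =>
    div_nonneg (by nlinarith) (sq_nonneg _)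
  -- pointwise Poisson bound
  have key : ∀ θ : ℝ, ‖h (circleMap 0 r1 θ)‖
      ≤ (2*π)⁻¹ * ∫ t in (0:ℝ)..(2*π), P θ t * ‖h (circleMap 0 r2 t)‖ := by
    intro θ
    have hwlt : ‖circleMap 0 r1 θ‖ < r2 := by rw [habs1]; exact h12
    have hrep := poisson_rep hr2 hcball hdball hwlt
    have hnorm : 2*π * ‖h (circleMap 0 r1 θ)‖
        ≤ ∫ t in (0:ℝ)..(2*π), P θ t * ‖h (circleMap 0 r2 t)‖ := by
      have h1n : ‖(2 * (π:ℂ) * h (circleMap 0 r1 θ))‖ = 2*π * ‖h (circleMap 0 r1 θ)‖ := by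
        simp [map_mul, Complex.norm_real, abs_of_pos Real.pi_pos]
      rw [← h1n, ← hrep]
      refine le_trans (intervalIntegral.norm_integral_le_integral_norm h2pi.le) ?_
      apply le_of_eq
      apply intervalIntegral.integral_congr
      intro t _
      simp only [norm_mul, Complex.norm_real, Real.norm_eq_abs]
      rw [habs1]
      rw [abs_of_nonneg (hPnonneg θ t)]
    rw [inv_mul_eq_div, le_div_iff₀ h2pi]
    linarith [hnorm]
  -- integrate the pointwise bound
  have step1 : (∫ θ in (0:ℝ)..(2*π), ‖h (circleMap 0 r1 θ)‖)
      ≤ ∫ θ in (0:ℝ)..(2*π),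
          (2*π)⁻¹ * ∫ t in (0:ℝ)..(2*π), P θ t * ‖h (circleMap 0 r2 t)‖ := by
    apply intervalIntegral.integral_mono_on h2pi.le
    · exact (continuous_norm.comp hhcm1).intervalIntegrable _ _
    · apply Continuous.intervalIntegrable
      exact continuous_const.mul
        (intervalIntegral.continuous_parametric_intervalIntegral_of_continuous' hQcont 0 (2*π))
    · intro θ _
      exact key θ
  -- Fubini
  have swap : (∫ θ in (0:ℝ)..(2*π), ∫ t in (0:ℝ)..(2*π), P θ t * ‖h (circleMap 0 r2 t)‖)
      = ∫ t in (0:ℝ)..(2*π), ∫ θ in (0:ℝ)..(2*π), P θ t * ‖h (circleMap 0 r2 t)‖ := by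
    simp_rw [intervalIntegral.integral_of_le h2pi.le]
    apply MeasureTheory.integral_integral_swap
    obtain ⟨C, hC⟩ := (isCompact_Icc.prod (isCompact_Icc (a := (0:ℝ)) (b := 2*π))).exists_bound_of_continuousOn
      (f := Function.uncurry (fun θ t => P θ t * ‖h (circleMap 0 r2 t)‖)) hQcont.continuousOn
    constructor
    · exact hQcont.aestronglyMeasurable
    · apply MeasureTheory.HasFiniteIntegral.of_bounded (C := C)
      rw [MeasureTheory.Measure.prod_restrict]
      filter_upwards [MeasureTheory.ae_restrict_mem (measurableSet_Ioc.prod measurableSet_Ioc)]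
        with p hp
      exact hC p ⟨Ioc_subset_Icc_self hp.1, Ioc_subset_Icc_self hp.2⟩
  -- the θ-integral of the Poisson kernel equals 2π
  have hkernel : ∀ t : ℝ, (∫ θ in (0:ℝ)..(2*π), P θ t) = 2*π := by
    intro t
    set p : ℝ → ℝ := fun s => (r2^2 - r1^2) / (‖circleMap 0 r2 s - (r1:ℂ)‖)^2 with hpdef
    have hPp : ∀ θ : ℝ, P θ t = p (t - θ) := by
      intro θ
      have hfact : circleMap 0 r2 t - circleMap 0 r1 θ
          = Complex.exp ((θ:ℂ) * Complex.I) * (circleMap 0 r2 (t - θ) - (r1:ℂ)) := by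
        simp only [circleMap, zero_add, Complex.ofReal_sub]
        rw [sub_mul, Complex.exp_sub]
        field_simp
      simp only [hPdef, hpdef]
      rw [hfact, norm_mul, Complex.norm_exp_ofReal_mul_I, one_mul]
    have hper : Function.Periodic p (2*π) := by
      intro s
      have : circleMap 0 r2 (s + 2*π) = circleMap 0 r2 s := periodic_circleMap 0 r2 s
      simp only [hpdef, this]
    have hp2pi : (∫ s in (0:ℝ)..(2*π), p s) = 2*π := by
      have hone : ∀ z ∈ ball (0:ℂ) r2, DifferentiableAt ℂ (fun _ : ℂ => (1:ℂ)) z :=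
        fun z _ => differentiableAt_const 1
      have habsr1 : ‖((r1:ℝ):ℂ)‖ < r2 := by
        rw [Complex.norm_real, Real.norm_eq_abs, abs_of_pos h1]; exact h12
      have hrep1 := poisson_rep hr2 continuousOn_const hone habsr1
      simp only [mul_one] at hrep1
      rw [Complex.norm_real, Real.norm_eq_abs, abs_of_pos h1] at hrep1
      have : ((∫ s in (0:ℝ)..(2*π), p s : ℝ) : ℂ) = ((2*π : ℝ) : ℂ) := by
        rw [← intervalIntegral.integral_ofReal]
        simp only [hpdef]
        rw [hrep1]
        push_cast
        ring
      exact_mod_cast this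
    calc (∫ θ in (0:ℝ)..(2*π), P θ t)
        = ∫ θ in (0:ℝ)..(2*π), p (t - θ) := by
          apply intervalIntegral.integral_congr; intro θ _; exact hPp θ
      _ = ∫ s in (t - 2*π)..(t - 0), p s := intervalIntegral.integral_comp_sub_left p t
      _ = ∫ s in (0:ℝ)..(2*π), p s := by
          have := hper.intervalIntegral_add_eq (t - 2*π) 0
          rw [sub_add_cancel] at this
          rw [sub_zero, this, zero_add]
      _ = 2*π := hp2pi
  -- compute the inner integral after swapping
  have inner : ∀ t : ℝ, (∫ θ in (0:ℝ)..(2*π), P θ t * ‖h (circleMap 0 r2 t)‖)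
      = 2*π * ‖h (circleMap 0 r2 t)‖ := by
    intro t
    rw [intervalIntegral.integral_mul_const, hkernel t]
  calc (∫ θ in (0:ℝ)..(2*π), ‖h (circleMap 0 r1 θ)‖)
      ≤ ∫ θ in (0:ℝ)..(2*π),
          (2*π)⁻¹ * ∫ t in (0:ℝ)..(2*π), P θ t * ‖h (circleMap 0 r2 t)‖ := step1
    _ = (2*π)⁻¹ * ∫ θ in (0:ℝ)..(2*π),
          ∫ t in (0:ℝ)..(2*π), P θ t * ‖h (circleMap 0 r2 t)‖ :=
        intervalIntegral.integral_const_mul _ _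
    _ = (2*π)⁻¹ * ∫ t in (0:ℝ)..(2*π),
          ∫ θ in (0:ℝ)..(2*π), P θ t * ‖h (circleMap 0 r2 t)‖ := by rw [swap]
    _ = (2*π)⁻¹ * ∫ t in (0:ℝ)..(2*π), 2*π * ‖h (circleMap 0 r2 t)‖ := by
        congr 1
        apply intervalIntegral.integral_congr
        intro t _
        exact inner t
    _ = ∫ t in (0:ℝ)..(2*π), ‖h (circleMap 0 r2 t)‖ := by
        rw [intervalIntegral.integral_const_mul, inv_mul_cancel_left₀ (ne_of_gt h2pi)]

/-- Monotonicity of the length functional under holomorphic extension to the disk: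
if g is holomorphic on the disk |z| < R then the length of the image of the circle
of radius r is nondecreasing in r on (0, R). -/
theorem length_functional_monotone
    (R : ℝ) (hR : 0 < R)
    (g : ℂ → ℂ)
    (hg : ∀ z : ℂ, ‖z‖ < R → DifferentiableAt ℂ g z) :
    MonotoneOn
      (fun r : ℝ => ∫ θ in (0:ℝ)..(2 * π),
        ‖deriv g ((r : ℂ) * Complex.exp ((θ : ℂ) * Complex.I))‖ * r)
      (Set.Ioo (0:ℝ) R) := by
  have hgo : DifferentiableOn ℂ g (ball (0:ℂ) R) := fun z hz =>
    (hg z (by simpa [mem_ball_zero_iff] using hz)).differentiableWithinAt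
  have hA : AnalyticOnNhd ℂ g (ball (0:ℂ) R) := hgo.analyticOnNhd isOpen_ball
  have hh : ∀ z : ℂ, ‖z‖ < R → DifferentiableAt ℂ (deriv g) z := fun z hz =>
    (hA.deriv z (by simpa [mem_ball_zero_iff] using hz)).differentiableAt
  intro r1 hr1 r2 hr2 hle
  rcases eq_or_lt_of_le hle with rfl | hlt
  · exact le_refl _
  simp only [← circleMap_zero, intervalIntegral.integral_mul_const]
  have hI1 : (0:ℝ) ≤ ∫ θ in (0:ℝ)..(2*π), ‖deriv g (circleMap 0 r1 θ)‖ :=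
    intervalIntegral.integral_nonneg Real.two_pi_pos.le fun θ _ => norm_nonneg _
  have hI12 := mean_mono hh hr1.1 hlt hr2.2
  exact mul_le_mul hI12 hle hr1.1.le (le_trans hI1 hI12)
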